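/- Let M = (E, H) be a simple matroid with flat lattice L. A subset W = {x_1,…,x_t} ⊆ E is a partial transversal of some partition Q_1,…,Q_k arising from a maximal chain of flats (Q_i = F_i \ F_{i-1}) if and only if the corresponding atoms {{x_1},…,{x_t}} index independent rows of the complemented structure matrix A^c of L over the superboolean semiring. -/

import Mathlib

open scoped Classical

/-- The superboolean semiring `SB = {0, 1, 1^ν}`. -/
def SB := Fin 3

instance : DecidableEq SB := inferInstanceAs (DecidableEq (Fin 3))
instance : Fintype SB := inferInstanceAs (Fintype (Fin 3))

def SB.zero : SB := (0 : Fin 3)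
def SB.one : SB := (1 : Fin 3)
/-- The ghost element `1^ν`. -/
def SB.nu : SB := (2 : Fin 3)

def SB.val (a : SB) : ℕ := Fin.val a

instance : Zero SB := ⟨SB.zero⟩
instance : One SB := ⟨SB.one⟩

def SB.add (a b : SB) : SB := (⟨min (a.val + b.val) 2, by omega⟩ : Fin 3)
def SB.mul (a b : SB) : SB := (⟨min (a.val * b.val) 2, by omega⟩ : Fin 3)

instance : Add SB := ⟨SB.add⟩
instance : Mul SB := ⟨SB.mul⟩

instance : AddCommMonoid SB where
  add := (· + ·)
  add_assoc := by decide
  zero_add := by decide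
  add_zero := by decide
  add_comm := by decide
  nsmul := nsmulRec

instance : CommMonoid SB where
  mul := (· * ·)
  mul_assoc := by decide
  one_mul := by decide
  mul_one := by decide
  mul_comm := by decide
  npow := npowRec

/-- The permanent of a square superboolean matrix. -/
def sbPer {n : ℕ} (A : Matrix (Fin n) (Fin n) SB) : SB :=
  ∑ π : Equiv.Perm (Fin n), ∏ i, A (π i) i

/-- A square superboolean matrix is nonsingular when its permanent is `1`. -/
def Nonsingular {n : ℕ} (A : Matrix (Fin n) (Fin n) SB) : Prop := sbPer A = SB.one

/-- Membership in the ghost ideal `{0, 1^ν}`. -/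
def SB.IsGhost (a : SB) : Prop := a = SB.zero ∨ a = SB.nu

/-- A family of superboolean vectors is dependent if some nontrivial boolean
combination of them lies entirely in the ghost ideal. -/
def SBDep {κ ι : Type*} [Fintype κ] (v : κ → ι → SB) : Prop :=
  ∃ α : κ → SB, (∀ k, α k = SB.zero ∨ α k = SB.one) ∧ (∃ k, α k ≠ SB.zero) ∧
    ∀ j : ι, SB.IsGhost (∑ k, α k * v k j)

/-- Independence of a family of superboolean vectors. -/
def SBIndep {κ ι : Type*} [Fintype κ] (v : κ → ι → SB) : Prop := ¬ SBDep v

/-- A matrix is boolean if none of its entries is the ghost `1^ν`. -/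
def IsBooleanMat {ι κ : Type*} (A : Matrix ι κ SB) : Prop := ∀ i j, A i j ≠ SB.nu
/-- A matroid in the sense of Whitney: a nonempty hereditary collection of
independent sets satisfying the exchange axiom. -/
structure PaperMatroid (E : Type*) [Fintype E] where
  Indep : Set E → Prop
  exists_indep : ∃ X, Indep X
  indep_subset : ∀ ⦃X Y : Set E⦄, X ⊆ Y → Indep Y → Indep X
  exchange : ∀ ⦃X Y : Set E⦄, Indep X → Indep Y → Y.ncard = X.ncard + 1 →
    ∃ y ∈ Y \ X, Indep (insert y X)

namespace PaperMatroid

variable {E : Type*} [Fintype E] (M : PaperMatroid E)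

/-- A circuit: a minimal dependent set. -/
def Circuit (C : Set E) : Prop := ¬ M.Indep C ∧ ∀ D ⊂ C, M.Indep D

/-- The closure of `X`: `X` together with all `y` for which some circuit
contained in `X ∪ {y}` contains `y`. -/
def cl (X : Set E) : Set E :=
  X ∪ {y | y ∉ X ∧ ∃ C, M.Circuit C ∧ C ⊆ insert y X ∧ y ∈ C}

/-- A flat (closed set). -/
def Flat (F : Set E) : Prop := M.cl F = F

/-- A simple matroid: every subset of size at most `2` is independent. -/
def Simple : Prop := ∀ X : Set E, X.ncard ≤ 2 → M.Indep X

/-- A basis: a maximal independent set. -/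
def Basis (B : Set E) : Prop :=
  M.Indep B ∧ ∀ X : Set E, M.Indep X → B ⊆ X → X = B

/-- The lattice of flats of `M`, ordered by inclusion. -/
abbrev Flats := {F : Set E // M.Flat F}

end PaperMatroid

/-- The complemented structure matrix of the lattice of flats of `M`:
entry `(F, G)` is `1` iff `F ⊄ G`, and `0` iff `F ⊆ G`. -/
noncomputable def AcM {E : Type*} [Fintype E] (M : PaperMatroid E) :
    Matrix M.Flats M.Flats SB :=
  fun F G => if F.1 ⊆ G.1 then SB.zero else SB.one

namespace TAux

lemma ghost_zero : SB.IsGhost SB.zero := Or.inl rfl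
lemma ghost_nu : SB.IsGhost SB.nu := Or.inr rfl
lemma not_ghost_one : ¬ SB.IsGhost SB.one := by
  rintro (h | h) <;> exact absurd h (by decide)

/-- Sum of 0/1-valued SB elements. -/
lemma sb_sum {κ : Type*} (s : Finset κ) (f : κ → SB)
    (hf : ∀ k, f k = SB.zero ∨ f k = SB.one) :
    ∑ k ∈ s, f k = if (s.filter (fun k => f k = SB.one)).card = 0 then SB.zero
      else if (s.filter (fun k => f k = SB.one)).card = 1 then SB.one else SB.nu := by
  classical
  induction s using Finset.induction_on with
  | empty => simp; rfl
  | @insert a s ha ih =>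
    rw [Finset.sum_insert ha, ih]
    rcases hf a with h | h
    · have hfa : (insert a s).filter (fun k => f k = SB.one)
          = s.filter (fun k => f k = SB.one) := by
        rw [Finset.filter_insert, if_neg (by rw [h]; decide)]
      rw [hfa, h, show ∀ y : SB, SB.zero + y = y from fun y => zero_add y]
    · have hfa : (insert a s).filter (fun k => f k = SB.one)
          = insert a (s.filter (fun k => f k = SB.one)) := by
        rw [Finset.filter_insert, if_pos h]
      rw [hfa, Finset.card_insert_of_notMem
        (fun hmem => ha (Finset.mem_of_mem_filter a hmem)), h]
      set c := (Finset.filter (fun k => f k = SB.one) s).card with hc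
      by_cases hc0 : c = 0
      · rw [if_pos hc0, if_neg (by omega), if_pos (by omega)]; decide
      · by_cases hc1 : c = 1
        · rw [if_neg hc0, if_pos hc1, if_neg (by omega), if_neg (by omega)]; decide
        · rw [if_neg hc0, if_neg hc1, if_neg (by omega), if_neg (by omega)]; decide

lemma sb_ghost_iff {κ : Type*} (s : Finset κ) (f : κ → SB)
    (hf : ∀ k, f k = SB.zero ∨ f k = SB.one) :
    SB.IsGhost (∑ k ∈ s, f k) ↔ (s.filter (fun k => f k = SB.one)).card ≠ 1 := by
  rw [sb_sum s f hf]
  by_cases h1 : (s.filter (fun k => f k = SB.one)).card = 0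
  · rw [if_pos h1]
    exact ⟨fun _ => by omega, fun _ => ghost_zero⟩
  · by_cases h2 : (s.filter (fun k => f k = SB.one)).card = 1
    · rw [if_neg h1, if_pos h2]
      exact ⟨fun h => absurd h not_ghost_one, fun h => absurd h2 h⟩
    · rw [if_neg h1, if_neg h2]
      exact ⟨fun _ => h2, fun _ => ghost_nu⟩

lemma sb_one_iff {κ : Type*} (s : Finset κ) (f : κ → SB)
    (hf : ∀ k, f k = SB.zero ∨ f k = SB.one) :
    ∑ k ∈ s, f k = SB.one ↔ (s.filter (fun k => f k = SB.one)).card = 1 := by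
  rw [sb_sum s f hf]
  by_cases h1 : (s.filter (fun k => f k = SB.one)).card = 0
  · rw [if_pos h1]; constructor
    · intro h; exact absurd h (by decide)
    · omega
  · by_cases h2 : (s.filter (fun k => f k = SB.one)).card = 1
    · rw [if_neg h1, if_pos h2]; exact ⟨fun _ => h2, fun _ => rfl⟩
    · rw [if_neg h1, if_neg h2]; constructor
      · intro h; exact absurd h (by decide)
      · intro h; exact absurd h h2

end TAux
namespace TAux

variable {E : Type*} [Fintype E] {M : PaperMatroid E}

lemma subset_cl (X : Set E) : X ⊆ M.cl X := Set.subset_union_left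

lemma cl_mono {X Y : Set E} (h : X ⊆ Y) : M.cl X ⊆ M.cl Y := by
  intro y hy
  rcases hy with hy | ⟨hyX, C, hC, hsub, hyC⟩
  · exact Or.inl (h hy)
  · by_cases hyY : y ∈ Y
    · exact Or.inl hyY
    · exact Or.inr ⟨hyY, C, hC, hsub.trans (Set.insert_subset_insert h), hyC⟩

lemma flat_univ : M.Flat Set.univ := by
  apply Set.Subset.antisymm _ (subset_cl _)
  rintro y (hy | ⟨hy, _⟩)
  · exact hy
  · exact absurd (Set.mem_univ y) hy

lemma flat_empty (hs : M.Simple) : M.Flat (∅ : Set E) := by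
  apply Set.Subset.antisymm _ (subset_cl _)
  rintro y (hy | ⟨-, C, hC, hsub, hyC⟩)
  · exact hy
  · exfalso
    apply hC.1
    apply hs
    calc C.ncard ≤ (insert y (∅ : Set E)).ncard :=
          Set.ncard_le_ncard hsub (Set.toFinite _)
      _ ≤ 2 := by simp

lemma flat_inter {F G : Set E} (hF : M.Flat F) (hG : M.Flat G) : M.Flat (F ∩ G) := by
  apply Set.Subset.antisymm _ (subset_cl _)
  intro y hy
  constructor
  · have := cl_mono (Set.inter_subset_left (s := F) (t := G)) hy
    rwa [hF] at this
  · have := cl_mono (Set.inter_subset_right (s := F) (t := G)) hy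
    rwa [hG] at this

end TAux
namespace TAux

variable {E : Type*} [Fintype E]

/-- Covering relation with the ≤1-marked-point property. -/
def Cov (M : PaperMatroid E) {t : ℕ} (x : Fin t → E) (X Y : Set E) : Prop :=
  X ⊂ Y ∧ M.Flat Y ∧ (∀ G, M.Flat G → ¬(X ⊂ G ∧ G ⊂ Y)) ∧
    ∀ a b : Fin t, x a ∈ Y \ X → x b ∈ Y \ X → a = b

lemma glue {α : Type*} {R : α → α → Prop} {l₁ l₂ : List α} {A B C : α}
    (h1 : l₁.head? = some A) (h1l : l₁.getLast? = some B)
    (h2 : l₂.head? = some B) (h2l : l₂.getLast? = some C)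
    (c1 : l₁.Chain' R) (c2 : l₂.Chain' R) :
    ∃ l : List α, l.head? = some A ∧ l.getLast? = some C ∧ l.Chain' R := by
  match l₂ with
  | [] => simp at h2
  | [b] =>
    have hb : b = B := by simpa using h2
    have hc : b = C := by simpa using h2l
    have hBC : B = C := hb ▸ hc
    exact ⟨l₁, h1, by rw [h1l, hBC], c1⟩
  | b :: c :: l₂' =>
    have hb : b = B := by simpa using h2
    have hl₁ : l₁ ≠ [] := by intro h; rw [h] at h1; simp at h1
    refine ⟨l₁ ++ (c :: l₂'), ?_, ?_, ?_⟩
    · rw [List.head?_append_of_ne_nil _ hl₁]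
      exact h1
    · rw [List.getLast?_append_of_ne_nil _ (by simp)]
      simpa using h2l
    · apply c1.append (c2.tail)
      intro p hp q hq
      rw [h1l] at hp
      simp only [Option.mem_def, Option.some_inj] at hp
      simp only [List.tail_cons, List.head?_cons, Option.mem_def, Option.some_inj] at hq
      subst hp; subst hq
      have := List.isChain_cons_cons.mp c2
      exact hb ▸ this.1

lemma exists_cov_chain (M : PaperMatroid E) {t : ℕ} (x : Fin t → E) :
    ∀ (n : ℕ) (A B : Set E), (B \ A).ncard ≤ n → M.Flat A → M.Flat B → A ⊆ B →
    (∀ a b : Fin t, x a ∈ B \ A → x b ∈ B \ A → a = b) →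
    ∃ l : List (Set E), l.head? = some A ∧ l.getLast? = some B ∧ l.Chain' (Cov M x) := by
  intro n
  induction n with
  | zero =>
    intro A B hn _ _ hAB _
    have hd : B \ A = ∅ := by
      rw [← Set.ncard_eq_zero (Set.toFinite _)]; omega
    have : A = B := Set.Subset.antisymm hAB (fun b hb => by
      by_contra hbA
      exact absurd (show b ∈ B \ A from ⟨hb, hbA⟩) (by rw [hd]; simp))
    exact ⟨[B], by rw [this]; rfl, rfl, List.isChain_singleton B⟩
  | succ n ih =>
    intro A B hn hA hB hAB hQ
    by_cases hEq : A = B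
    · exact ⟨[B], by rw [hEq]; rfl, rfl, List.isChain_singleton B⟩
    · have hAB' : A ⊂ B := Set.ssubset_iff_subset_ne.mpr ⟨hAB, hEq⟩
      have hp : ∃ m : ℕ, ∃ D : Set E, M.Flat D ∧ A ⊂ D ∧ D ⊆ B ∧ D.ncard = m :=
        ⟨B.ncard, B, hB, hAB', subset_rfl, rfl⟩
      obtain ⟨C, hCf, hAC, hCB, hCn⟩ := Nat.find_spec hp
      have hcov : ∀ G, M.Flat G → ¬(A ⊂ G ∧ G ⊂ C) := by
        rintro G hG ⟨hg1, hg2⟩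
        exact Nat.find_min hp
          (show G.ncard < Nat.find hp by
            rw [← hCn]; exact Set.ncard_lt_ncard hg2 (Set.toFinite _))
          ⟨G, hG, hg1, hg2.subset.trans hCB, rfl⟩
      obtain ⟨c, hcC, hcA⟩ := Set.exists_of_ssubset hAC
      have hm : (B \ C).ncard ≤ n := by
        have h1 : B \ C ⊂ B \ A :=
          ⟨Set.diff_subset_diff_right hAC.subset,
            fun hsub => (hsub ⟨hCB hcC, hcA⟩).2 hcC⟩
        have := Set.ncard_lt_ncard h1 (Set.toFinite _)
        omega
      obtain ⟨l', h1, h2, h3⟩ := ih C B hm hCf hB hCB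
        (fun a b ha hb => hQ a b ⟨ha.1, fun h => ha.2 (hAC.subset h)⟩
          ⟨hb.1, fun h => hb.2 (hAC.subset h)⟩)
      refine ⟨A :: l', rfl, ?_, ?_⟩
      · match l', h2 with
        | c' :: l'', h2 => rw [List.getLast?_cons_cons]; exact h2
      · refine List.isChain_cons.mpr ?_
        refine ⟨?_, h3⟩
        intro y hy
        rw [h1] at hy
        simp only [Option.mem_def, Option.some_inj] at hy
        subst hy
        exact ⟨hAC, hCf, hcov,
          fun a b ha hb => hQ a b ⟨hCB ha.1, ha.2⟩ ⟨hCB hb.1, hb.2⟩⟩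

end TAux
namespace TAux

variable {E : Type*} [Fintype E]

lemma exists_point_chain (M : PaperMatroid E) (hs : M.Simple) {t : ℕ} (x : Fin t → E)
    (hsep : ∀ S : Finset (Fin t), S.Nonempty →
      ∃ G : Set E, M.Flat G ∧ ∃ a, (a ∈ S ∧ x a ∉ G) ∧ ∀ b, b ∈ S ∧ x b ∉ G → b = a) :
    ∀ (n : ℕ) (S : Finset (Fin t)) (B : Set E), S.card ≤ n → M.Flat B →
      (∀ a, a ∈ S ↔ x a ∈ B) →
      ∃ l : List (Set E), l.head? = some (∅ : Set E) ∧ l.getLast? = some B ∧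
        l.Chain' (Cov M x) := by
  intro n
  induction n with
  | zero =>
    intro S B hn hB hmem
    have hS : S = ∅ := Finset.card_eq_zero.mp (by omega)
    apply exists_cov_chain M x (B \ ∅).ncard ∅ B le_rfl (flat_empty hs) hB (Set.empty_subset B)
    intro a b ha _
    exact absurd ((hmem a).mpr ha.1) (by rw [hS]; simp)
  | succ n ih =>
    intro S B hn hB hmem
    rcases S.eq_empty_or_nonempty with hS | hSne
    · apply exists_cov_chain M x (B \ ∅).ncard ∅ B le_rfl (flat_empty hs) hB (Set.empty_subset B)
      intro a b ha _
      exact absurd ((hmem a).mpr ha.1) (by rw [hS]; simp)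
    · obtain ⟨G, hG, a₀, ⟨ha₀S, ha₀G⟩, huniq⟩ := hsep S hSne
      set B' := B ∩ G with hB'
      have hmem' : ∀ a, a ∈ S.erase a₀ ↔ x a ∈ B' := by
        intro a
        constructor
        · intro ha
          obtain ⟨hne, haS⟩ := Finset.mem_erase.mp ha
          refine ⟨(hmem a).mp haS, ?_⟩
          by_contra hxa
          exact hne (huniq a ⟨haS, hxa⟩)
        · rintro ⟨haB, haG⟩
          refine Finset.mem_erase.mpr ⟨?_, (hmem a).mpr haB⟩
          intro h
          exact ha₀G (h ▸ haG)
      have hcard : (S.erase a₀).card ≤ n := by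
        have h1 := Finset.card_erase_of_mem ha₀S
        have h2 : 1 ≤ S.card := Finset.card_pos.mpr hSne
        omega
      obtain ⟨l₁, hl₁h, hl₁l, hl₁c⟩ := ih (S.erase a₀) B' hcard (flat_inter hB hG) hmem'
      obtain ⟨l₂, hl₂h, hl₂l, hl₂c⟩ :=
        exists_cov_chain M x ((B \ B').ncard) B' B le_rfl (flat_inter hB hG) hB
          Set.inter_subset_left
          (by
            intro a b ha hb
            have haa : a = a₀ := by
              apply huniq
              refine ⟨(hmem a).mpr ha.1, fun hxa => ha.2 ⟨ha.1, hxa⟩⟩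
            have hbb : b = a₀ := by
              apply huniq
              refine ⟨(hmem b).mpr hb.1, fun hxb => hb.2 ⟨hb.1, hxb⟩⟩
            rw [haa, hbb])
      exact glue hl₁h hl₁l hl₂h hl₂l hl₁c hl₂c

end TAux
namespace TAux

lemma mul01 : ∀ a b : SB, (a = SB.zero ∨ a = SB.one) → (b = SB.zero ∨ b = SB.one) →
    (a * b = SB.zero ∨ a * b = SB.one) := by decide

lemma mul_eq_one_iff : ∀ a b : SB, a * b = SB.one ↔ (a = SB.one ∧ b = SB.one) := by decide

end TAux


/-- A subset of the ground set of a simple matroid is a partial transversal of the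
partition arising from some maximal chain of flats iff the corresponding atoms index
independent rows of the complemented structure matrix of the lattice of flats. -/
theorem transversal_iff_rows_indep {E : Type*} [Fintype E] (M : PaperMatroid E)
    (hs : M.Simple) {t : ℕ} (x : Fin t → E) (hx : Function.Injective x) :
    (∃ (k : ℕ) (F : Fin (k + 1) → Set E),
      (∀ i, M.Flat (F i)) ∧ StrictMono F ∧ F 0 = ∅ ∧ F (Fin.last k) = Set.univ ∧
      (∀ i : Fin k, ∀ G : Set E, M.Flat G →
        ¬ (F i.castSucc ⊂ G ∧ G ⊂ F i.succ)) ∧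
      (∀ a b : Fin t, ∀ i : Fin k,
      x a ∈ F i.succ \ F i.castSucc → x b ∈ F i.succ \ F i.castSucc → a = b)) ↔
    SBIndep (fun a (G : M.Flats) => if x a ∈ G.1 then SB.zero else SB.one) := by
  classical
  constructor
  · rintro ⟨k, F, hflat, hmono, h0, hlast, hcover, htrans⟩ ⟨α, hα, ⟨k₀, hk₀⟩, hgh⟩
    -- every point lies in some block
    have hblock : ∀ a : Fin t, ∃ i : Fin k, x a ∈ F i.succ ∧ x a ∉ F i.castSucc := by
      intro a
      suffices h : ∀ j : ℕ, ∀ hj : j < k + 1, x a ∈ F ⟨j, hj⟩ →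
          ∃ i : Fin k, x a ∈ F i.succ ∧ x a ∉ F i.castSucc by
        apply h k (Nat.lt_succ_self k)
        have hkl : (⟨k, Nat.lt_succ_self k⟩ : Fin (k+1)) = Fin.last k := rfl
        rw [hkl, hlast]; trivial
      intro j
      induction j with
      | zero =>
        intro hj h
        rw [show (⟨0, hj⟩ : Fin (k+1)) = 0 from rfl, h0] at h
        exact absurd h (Set.notMem_empty _)
      | succ m ihm =>
        intro hj h
        have hm : m < k + 1 := by omega
        by_cases hmem : x a ∈ F ⟨m, hm⟩
        · exact ihm hm hmem
        · refine ⟨⟨m, by omega⟩, ?_, ?_⟩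
          · have he : (⟨m, by omega⟩ : Fin k).succ = ⟨m+1, hj⟩ := rfl
            rw [he]; exact h
          · have he : (⟨m, by omega⟩ : Fin k).castSucc = ⟨m, hm⟩ := rfl
            rw [he]; exact hmem
    choose g hg1 hg2 using hblock
    set S := Finset.univ.filter (fun a : Fin t => α a = SB.one) with hSdef
    have hSne : S.Nonempty := by
      refine ⟨k₀, ?_⟩
      rw [hSdef, Finset.mem_filter]
      rcases hα k₀ with h | h
      · exact absurd h hk₀
      · exact ⟨Finset.mem_univ _, h⟩
    obtain ⟨a₀, ha₀, hmax⟩ := S.exists_max_image g hSne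
    have hGflat : M.Flat (F (g a₀).castSucc) := hflat _
    set f := fun a : Fin t =>
      α a * (if x a ∈ F (g a₀).castSucc then SB.zero else SB.one) with hfdef
    have hf01 : ∀ a, f a = SB.zero ∨ f a = SB.one := by
      intro a
      apply TAux.mul01 _ _ (hα a)
      by_cases h : x a ∈ F (g a₀).castSucc <;> simp [h]
    have hone : ∀ a, f a = SB.one ↔ (α a = SB.one ∧ x a ∉ F (g a₀).castSucc) := by
      intro a
      rw [hfdef]
      simp only []
      rw [TAux.mul_eq_one_iff]
      by_cases h : x a ∈ F (g a₀).castSucc <;> simp [h]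
      intro _; decide
    have hfilter : Finset.univ.filter (fun a => f a = SB.one) = {a₀} := by
      apply Finset.eq_singleton_iff_unique_mem.mpr
      constructor
      · exact Finset.mem_filter.mpr ⟨Finset.mem_univ _,
          (hone a₀).mpr ⟨(Finset.mem_filter.mp ha₀).2, hg2 a₀⟩⟩
      · intro b hb
        obtain ⟨hb1, hb2⟩ := (hone b).mp (Finset.mem_filter.mp hb).2
        have hbS : b ∈ S := Finset.mem_filter.mpr ⟨Finset.mem_univ _, hb1⟩
        have hle : g b ≤ g a₀ := hmax b hbS
        rcases hle.lt_or_eq with hlt | heq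
        · exfalso
          apply hb2
          have hsub : F (g b).succ ⊆ F (g a₀).castSucc := by
            apply hmono.monotone
            rw [Fin.le_def]
            simp only [Fin.val_succ, Fin.coe_castSucc]
            rw [Fin.lt_def] at hlt
            omega
          exact hsub (hg1 b)
        · exact htrans b a₀ (g a₀) ⟨heq ▸ hg1 b, hb2⟩ ⟨hg1 a₀, hg2 a₀⟩
    have hcard : (Finset.univ.filter (fun a => f a = SB.one)).card = 1 := by
      rw [hfilter]; exact Finset.card_singleton _
    have hsum : ∑ a, f a = SB.one := (TAux.sb_one_iff _ _ hf01).mpr hcard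
    have hghost := hgh ⟨F (g a₀).castSucc, hGflat⟩
    rw [show (∑ k1 : Fin t, α k1 *
        (if x k1 ∈ (⟨F (g a₀).castSucc, hGflat⟩ : M.Flats).1 then SB.zero else SB.one))
        = SB.one from hsum] at hghost
    exact TAux.not_ghost_one hghost
  · intro hindep
    have hsep : ∀ S : Finset (Fin t), S.Nonempty →
        ∃ G : Set E, M.Flat G ∧ ∃ a, (a ∈ S ∧ x a ∉ G) ∧
          ∀ b, b ∈ S ∧ x b ∉ G → b = a := by
      intro S hSne
      by_contra hno
      push_neg at hno
      apply hindep
      refine ⟨fun a => if a ∈ S then SB.one else SB.zero, ?_, ?_, ?_⟩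
      · intro a
        by_cases h : a ∈ S
        · right; show (if a ∈ S then SB.one else SB.zero) = SB.one; rw [if_pos h]
        · left; show (if a ∈ S then SB.one else SB.zero) = SB.zero; rw [if_neg h]
      · obtain ⟨a, ha⟩ := hSne
        refine ⟨a, ?_⟩
        show (if a ∈ S then SB.one else SB.zero) ≠ SB.zero
        rw [if_pos ha]; decide
      · intro j
        set f := fun a : Fin t => (if a ∈ S then SB.one else SB.zero) *
          (if x a ∈ j.1 then SB.zero else SB.one) with hfdef
        have hf01 : ∀ a, f a = SB.zero ∨ f a = SB.one := by
          intro a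
          apply TAux.mul01
          · by_cases h : a ∈ S <;> simp [h]
          · by_cases h : x a ∈ j.1 <;> simp [h]
        have hone : ∀ a, f a = SB.one ↔ (a ∈ S ∧ x a ∉ j.1) := by
          intro a
          rw [hfdef]
          simp only []
          rw [TAux.mul_eq_one_iff]
          by_cases h1 : a ∈ S <;> by_cases h2 : x a ∈ j.1 <;> simp [h1, h2] <;> decide
        show SB.IsGhost (∑ a, f a)
        rw [TAux.sb_ghost_iff _ _ hf01]
        intro hcard
        obtain ⟨b, hb⟩ := Finset.card_eq_one.mp hcard
        have hbmem : b ∈ Finset.univ.filter (fun a => f a = SB.one) := by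
          rw [hb]; exact Finset.mem_singleton_self b
        have hbP : b ∈ S ∧ x b ∉ j.1 := (hone b).mp (Finset.mem_filter.mp hbmem).2
        obtain ⟨b', hb'P, hb'ne⟩ := hno j.1 j.2 b hbP
        apply hb'ne
        have : b' ∈ Finset.univ.filter (fun a => f a = SB.one) :=
          Finset.mem_filter.mpr ⟨Finset.mem_univ _, (hone b').mpr hb'P⟩
        rw [hb] at this
        exact Finset.mem_singleton.mp this
    obtain ⟨l, hh, hl, hc⟩ := TAux.exists_point_chain M hs x hsep Finset.univ.card
      Finset.univ Set.univ le_rfl TAux.flat_univ (by intro a; simp)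
    have hlpos : 0 < l.length := by
      cases l with
      | nil => simp at hh
      | cons a l' => simp
    have hk : l.length = (l.length - 1) + 1 := by omega
    have hcons := List.isChain_iff_getElem.mp hc
    have hget0 : ∀ h : 0 < l.length, l.get ⟨0, h⟩ = ∅ := by
      cases l with
      | nil => simp at hh
      | cons a l' => intro h; simpa using hh
    have hgetlast : ∀ h : l.length - 1 < l.length, l.get ⟨l.length - 1, h⟩ = Set.univ := by
      intro h
      have hne : l ≠ [] := List.length_pos_iff.mp hlpos
      have h1 := List.getLast?_eq_getLast hne
      rw [hl] at h1
      have h2 : l.getLast hne = Set.univ := by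
        simpa using h1.symm
      rw [← h2, List.getLast_eq_getElem, List.get_eq_getElem]
    refine ⟨l.length - 1, fun i => l.get ⟨i.val, by have := i.isLt; omega⟩,
      ?_, ?_, ?_, ?_, ?_, ?_⟩
    · rintro ⟨iv, hiv⟩
      cases iv with
      | zero =>
        show M.Flat (l.get ⟨0, hlpos⟩)
        rw [hget0 hlpos]
        exact TAux.flat_empty hs
      | succ m => exact (hcons m (by omega)).2.1
    · rw [Fin.strictMono_iff_lt_succ]
      intro i
      exact Set.lt_iff_ssubset.mpr (hcons i.val (by have := i.isLt; omega)).1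
    · exact hget0 hlpos
    · exact hgetlast (by omega)
    · intro i G hG
      exact (hcons i.val (by have := i.isLt; omega)).2.2.1 G hG
    · intro a b i ha hb
      exact (hcons i.val (by have := i.isLt; omega)).2.2.2 a b ha hb
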